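/- Let N ≥ 1 be an integer, let g be a polynomial with real coefficients, and let f be a polynomial such that g(t) − (1/(2π)) ∫_{−2}^{2} g(s) √(4 − s²) ds = (t² − 4) f'(t) + 3 t f(t) for all real t. Then ∫_{−∞}^{∞} g(t) p_N(t) dt = (1/(2π)) ∫_{−2}^{2} g(s) √(4 − s²) ds + (1/N²) ∫_{−∞}^{∞} f'''(t) p_N(t) dt. -/

import Mathlib

open MeasureTheory Real Filter Finset Polynomial intervalIntegral

/-- Hermite polynomials with parameter `N`. -/
noncomputable def hermN (N k : ℕ) (x : ℝ) : ℝ :=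
  (-1 : ℝ) ^ k * Real.exp (N * x ^ 2 / 2) *
    iteratedDeriv k (fun y : ℝ => Real.exp (-(N * y ^ 2) / 2)) x

/-- Normalized Hermite polynomials. -/
noncomputable def htilde (N k : ℕ) (x : ℝ) : ℝ :=
  hermN N k x / Real.sqrt (k.factorial * N ^ k * Real.sqrt (2 * Real.pi / N))

/-- The mean eigenvalue density of the GUE(N) ensemble. -/
noncomputable def gueDensity (N : ℕ) (t : ℝ) : ℝ :=
  (1 / N) * Real.exp (-(N * t ^ 2) / 2) * ∑ k ∈ Finset.range N, (htilde N k t) ^ 2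

namespace GueAux



lemma abs_pow_mul_exp_le {c : ℝ} (hc : 0 < c) (n : ℕ) (x : ℝ) :
    |x| ^ n * Real.exp (-(c * x ^ 2)) ≤ 1 + n.factorial * c⁻¹ ^ n := by
  have hexp_pos : (0:ℝ) < Real.exp (-(c * x ^ 2)) := Real.exp_pos _
  have hexp1 : Real.exp (-(c * x ^ 2)) ≤ 1 := by
    rw [Real.exp_le_one_iff]
    have : (0:ℝ) ≤ c * x ^ 2 := by positivity
    linarith
  have h1 : |x| ^ n ≤ 1 + (x ^ 2) ^ n := by
    rcases le_total (|x|) 1 with h | h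
    · have h0 : |x| ^ n ≤ 1 := pow_le_one₀ (abs_nonneg x) h
      have : (0:ℝ) ≤ (x ^ 2) ^ n := pow_nonneg (sq_nonneg x) n
      linarith
    · calc |x| ^ n ≤ |x| ^ (2 * n) := pow_le_pow_right₀ h (by omega)
        _ = (x ^ 2) ^ n := by rw [pow_mul, sq_abs]
        _ ≤ 1 + (x ^ 2) ^ n := by linarith [pow_nonneg (sq_nonneg x) n]
  have h2 : (x ^ 2) ^ n * Real.exp (-(c * x ^ 2)) ≤ n.factorial * c⁻¹ ^ n := by
    have hy : (0:ℝ) ≤ c * x ^ 2 := by positivity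
    have h3 := Real.pow_div_factorial_le_exp _ hy n
    have hfac : (0:ℝ) < n.factorial := by positivity
    have hcn : (0:ℝ) < c ^ n := by positivity
    have h4 : c ^ n * (x ^ 2) ^ n ≤ n.factorial * Real.exp (c * x ^ 2) := by
      rw [div_le_iff₀ hfac] at h3
      calc c ^ n * (x ^ 2) ^ n = (c * x ^ 2) ^ n := by rw [mul_pow]
        _ ≤ Real.exp (c * x ^ 2) * n.factorial := h3
        _ = n.factorial * Real.exp (c * x ^ 2) := by ring
    have h5 : (x ^ 2) ^ n * Real.exp (-(c * x ^ 2)) * c ^ n ≤ n.factorial * c⁻¹ ^ n * c ^ n := by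
      have he : Real.exp (c * x ^ 2) * Real.exp (-(c * x ^ 2)) = 1 := by
        rw [← Real.exp_add]; simp
      have := mul_le_mul_of_nonneg_right h4 hexp_pos.le
      calc (x ^ 2) ^ n * Real.exp (-(c * x ^ 2)) * c ^ n
          = c ^ n * (x ^ 2) ^ n * Real.exp (-(c * x ^ 2)) := by ring
        _ ≤ n.factorial * Real.exp (c * x ^ 2) * Real.exp (-(c * x ^ 2)) := this
        _ = n.factorial * (Real.exp (c * x ^ 2) * Real.exp (-(c * x ^ 2))) := by ring
        _ = n.factorial := by rw [he, mul_one]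
        _ = n.factorial * c⁻¹ ^ n * c ^ n := by
            rw [inv_pow]; field_simp
    exact le_of_mul_le_mul_right h5 hcn
  calc |x| ^ n * Real.exp (-(c * x ^ 2))
      ≤ (1 + (x ^ 2) ^ n) * Real.exp (-(c * x ^ 2)) :=
        mul_le_mul_of_nonneg_right h1 hexp_pos.le
    _ = Real.exp (-(c * x ^ 2)) + (x ^ 2) ^ n * Real.exp (-(c * x ^ 2)) := by ring
    _ ≤ 1 + n.factorial * c⁻¹ ^ n := add_le_add hexp1 h2

/-- Any polynomial times a gaussian is bounded. -/
lemma exists_poly_gauss_bound {c : ℝ} (hc : 0 < c) (q : ℝ[X]) :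
    ∃ C : ℝ, ∀ x : ℝ, |q.eval x| * Real.exp (-(c * x ^ 2)) ≤ C := by
  refine ⟨∑ i ∈ range (q.natDegree + 1), |q.coeff i| * (1 + i.factorial * c⁻¹ ^ i), fun x => ?_⟩
  have h1 : |q.eval x| ≤ ∑ i ∈ range (q.natDegree + 1), |q.coeff i| * |x| ^ i := by
    rw [q.eval_eq_sum_range]
    refine (Finset.abs_sum_le_sum_abs _ _).trans ?_
    apply Finset.sum_le_sum
    intro i _
    rw [abs_mul, abs_pow]
  calc |q.eval x| * Real.exp (-(c * x ^ 2))
      ≤ (∑ i ∈ range (q.natDegree + 1), |q.coeff i| * |x| ^ i) * Real.exp (-(c * x ^ 2)) :=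
        mul_le_mul_of_nonneg_right h1 (Real.exp_pos _).le
    _ = ∑ i ∈ range (q.natDegree + 1), |q.coeff i| * (|x| ^ i * Real.exp (-(c * x ^ 2))) := by
        rw [Finset.sum_mul]; apply Finset.sum_congr rfl; intros; ring
    _ ≤ ∑ i ∈ range (q.natDegree + 1), |q.coeff i| * (1 + i.factorial * c⁻¹ ^ i) := by
        apply Finset.sum_le_sum
        intro i _
        exact mul_le_mul_of_nonneg_left (abs_pow_mul_exp_le hc i x) (abs_nonneg _)

lemma integrable_poly_gauss {b : ℝ} (hb : 0 < b) (q : ℝ[X]) :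
    Integrable fun x : ℝ => q.eval x * Real.exp (-(b * x ^ 2)) := by
  obtain ⟨C, hC⟩ := exists_poly_gauss_bound (half_pos hb) q
  refine Integrable.mono' ((integrable_exp_neg_mul_sq (half_pos hb)).const_mul C)
    ?_ (ae_of_all _ fun x => ?_)
  · exact (q.continuous_aeval.mul (Real.continuous_exp.comp (by continuity))).aestronglyMeasurable
  · have hsplit : Real.exp (-(b * x ^ 2)) =
        Real.exp (-(b / 2 * x ^ 2)) * Real.exp (-(b / 2 * x ^ 2)) := by
      rw [← Real.exp_add]; ring_nf
    rw [Real.norm_eq_abs, abs_mul, abs_of_pos (Real.exp_pos _), hsplit, ← mul_assoc]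
    have h9 : -(b / 2) * x ^ 2 = -(b / 2 * x ^ 2) := by ring
    rw [h9]
    exact mul_le_mul_of_nonneg_right (hC x) (Real.exp_pos _).le

lemma tendsto_sq_param_atTop {b : ℝ} (hb : 0 < b) :
    Tendsto (fun x : ℝ => -(b * x ^ 2)) atTop atBot := by
  have h1 : Tendsto (fun x : ℝ => b * x ^ 2) atTop atTop :=
    (tendsto_pow_atTop two_ne_zero).const_mul_atTop hb
  exact tendsto_neg_atTop_atBot.comp h1

lemma tendsto_sq_param_atBot {b : ℝ} (hb : 0 < b) :
    Tendsto (fun x : ℝ => -(b * x ^ 2)) atBot atBot := by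
  have h1 : Tendsto (fun x : ℝ => -(b * (-x) ^ 2)) atBot atBot :=
    (tendsto_sq_param_atTop hb).comp tendsto_neg_atBot_atTop
  refine h1.congr (fun x => by ring_nf)

/-- Polynomial times gaussian tends to zero at `atTop`/`atBot`. -/
lemma tendsto_poly_gauss {b : ℝ} (hb : 0 < b) (q : ℝ[X]) (l : Filter ℝ)
    (hl : Tendsto (fun x : ℝ => -(b / 2 * x ^ 2)) l atBot) :
    Tendsto (fun x : ℝ => q.eval x * Real.exp (-(b * x ^ 2))) l (nhds 0) := by
  obtain ⟨C, hC⟩ := exists_poly_gauss_bound (half_pos hb) q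
  have hg : Tendsto (fun x : ℝ => C * Real.exp (-(b / 2 * x ^ 2))) l (nhds 0) := by
    have := (Real.tendsto_exp_atBot.comp hl).const_mul C
    simpa using this
  refine squeeze_zero_norm (fun x => ?_) hg
  have hsplit : Real.exp (-(b * x ^ 2)) =
      Real.exp (-(b / 2 * x ^ 2)) * Real.exp (-(b / 2 * x ^ 2)) := by
    rw [← Real.exp_add]; ring_nf
  rw [Real.norm_eq_abs, abs_mul, abs_of_pos (Real.exp_pos _), hsplit, ← mul_assoc]
  exact mul_le_mul_of_nonneg_right (hC x) (Real.exp_pos _).le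

/-- Integral over ℝ of a derivative of a function vanishing at ±∞ is zero. -/
lemma integral_deriv_zero (F F' : ℝ → ℝ) (hd : ∀ x, HasDerivAt F (F' x) x)
    (hi : Integrable F') (ht : Tendsto F atTop (nhds 0))
    (hb : Tendsto F atBot (nhds 0)) : ∫ x, F' x = 0 := by
  rw [← intervalIntegral.integral_Iic_add_Ioi (b := (0:ℝ)) hi.integrableOn hi.integrableOn,
    integral_Ioi_of_hasDerivAt_of_tendsto' (fun x _ => hd x) hi.integrableOn ht,
    integral_Iic_of_hasDerivAt_of_tendsto' (fun x _ => hd x) hi.integrableOn hb]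
  ring



/-- Monic-type Hermite polynomials with parameter `N` (as a real `a`). -/
noncomputable def HP (a : ℝ) : ℕ → ℝ[X]
  | 0 => 1
  | k + 1 => C a * X * HP a k - derivative (HP a k)

/-- Shifted version: `HPm a k = HP a (k-1)`, with `HPm a 0 = 0`. -/
noncomputable def HPm (a : ℝ) : ℕ → ℝ[X]
  | 0 => 0
  | k + 1 => HP a k

lemma HP_deriv_pair (a : ℝ) : ∀ k : ℕ,
    derivative (HP a k) = C ((k : ℝ) * a) * HPm a k ∧
    derivative (HP a (k + 1)) = C (((k : ℝ) + 1) * a) * HPm a (k + 1) := by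
  intro k
  induction k with
  | zero =>
    constructor
    · simp [HP, HPm]
    · simp [HP, HPm]
  | succ k ih =>
    refine ⟨by simpa using ih.2, ?_⟩
    have h1 : HP a (k + 1 + 1) = C a * X * HP a (k + 1) - derivative (HP a (k + 1)) := rfl
    have h3 : HPm a (k+1) = HP a k := rfl
    have h4 : HPm a (k+1+1) = HP a (k+1) := rfl
    have h2 : HP a (k + 1) = C a * X * HP a k - C ((k : ℝ) * a) * HPm a k := by
      rw [HP, ih.1]
    rw [h1, derivative_sub, derivative_mul, derivative_mul, derivative_C, derivative_X,
      ih.2, h3, h4, derivative_mul, derivative_C, ih.1]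
    push_cast
    have hC1 : C (((k:ℝ)+1+1) * a) = C a + C (((k:ℝ)+1) * a) := by
      rw [← C_add]; ring_nf
    have hC2 : C (((k:ℝ)+1) * a) * C ((k:ℝ)*a) = C (((k:ℝ)+1)*a * ((k:ℝ)*a)) := by
      rw [← C_mul]
    calc (0 * X + C a * 1) * HP a (k+1) + C a * X * (C (((k:ℝ)+1) * a) * HP a k) -
          (0 * HP a k + C (((k:ℝ)+1)*a) * (C ((k:ℝ)*a) * HPm a k))
        = C a * HP a (k+1) +
            C (((k:ℝ)+1)*a) * (C a * X * HP a k - C ((k:ℝ)*a) * HPm a k) := by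
          ring
      _ = C a * HP a (k+1) + C (((k:ℝ)+1)*a) * HP a (k+1) := by rw [← h2]
      _ = C (((k:ℝ)+1+1) * a) * HP a (k+1) := by rw [hC1]; ring

lemma HP_deriv (a : ℝ) (k : ℕ) :
    derivative (HP a k) = C ((k : ℝ) * a) * HPm a k := (HP_deriv_pair a k).1

lemma HP_rec (a : ℝ) (k : ℕ) :
    C a * X * HP a k = HP a (k + 1) + C ((k : ℝ) * a) * HPm a k := by
  rw [show HP a (k+1) = C a * X * HP a k - derivative (HP a k) from rfl, HP_deriv]
  ring

noncomputable def dd (N k : ℕ) : ℝ := ((k.factorial : ℝ) * (N : ℝ) ^ k)⁻¹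

lemma dd_zero (N : ℕ) : dd N 0 = 1 := by simp [dd]

lemma dd_pos {N : ℕ} (hN : 0 < N) (k : ℕ) : 0 < dd N k := by
  have h1 : (0:ℝ) < (k.factorial : ℝ) := by positivity
  have h2 : (0:ℝ) < (N:ℝ) ^ k := by positivity
  exact inv_pos.mpr (by positivity)

lemma dd_succ {N : ℕ} (hN : 0 < N) (n : ℕ) :
    dd N n = dd N (n + 1) * (((n : ℝ) + 1) * N) := by
  have hfac : ((n.factorial : ℝ)) ≠ 0 := by positivity
  have hNn : ((N:ℝ)) ≠ 0 := by positivity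
  unfold dd
  rw [Nat.factorial_succ]
  push_cast
  field_simp
  ring

noncomputable def sig (N n : ℕ) : ℝ[X] :=
  ∑ k ∈ range n, C (dd N k) * (HP (N : ℝ) k) ^ 2

lemma sig_succ (N n : ℕ) :
    sig N (n + 1) = sig N n + C (dd N n) * (HP (N : ℝ) n) ^ 2 := by
  rw [sig, Finset.sum_range_succ, ← sig]

/-- Christoffel–Darboux diagonal identity. -/
lemma CD {N : ℕ} (hN : 0 < N) (n : ℕ) :
    sig N (n + 1) = C (dd N n) *
      (C ((n : ℝ) + 1) * (HP (N:ℝ) n) ^ 2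
        - C (n : ℝ) * (HPm (N:ℝ) n * HP (N:ℝ) (n + 1))) := by
  induction n with
  | zero =>
    rw [sig_succ]
    simp [sig, dd_zero, HP, HPm]
  | succ n ih =>
    rw [sig_succ, ih]
    apply Polynomial.funext; intro x
    have e1 := congrArg (eval x) (HP_rec (N:ℝ) n)
    have e2 := congrArg (eval x) (HP_rec (N:ℝ) (n + 1))
    have hd := dd_succ hN n
    rw [show HPm (N:ℝ) (n+1) = HP (N:ℝ) n from rfl] at e2 ⊢
    simp only [eval_add, eval_sub, eval_mul, eval_pow, eval_C, eval_X] at e1 e2 ⊢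
    push_cast at e1 e2 ⊢
    linear_combination (((n:ℝ)+1) * (eval x (HP (N:ℝ) n))^2
        - (n:ℝ) * (eval x (HPm (N:ℝ) n)) * (eval x (HP (N:ℝ) (n+1)))) * hd
      + dd N (n+1) * ((n:ℝ)+1) * ((eval x (HP (N:ℝ) (n+1))) * e1
        - (eval x (HP (N:ℝ) n)) * e2)

/-- Three-term-recurrence consequence: `N·X·σ`. -/
lemma Xsig {N : ℕ} (hN : 0 < N) (n : ℕ) :
    C (N:ℝ) * (X * sig N (n + 1)) = C (dd N n) *
      (C ((n : ℝ) + 1) * (HP (N:ℝ) n * HP (N:ℝ) (n + 1))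
        - C (n : ℝ) * (HPm (N:ℝ) n * HP (N:ℝ) (n + 2))) := by
  rw [CD hN n]
  apply Polynomial.funext; intro x
  have e1 := congrArg (eval x) (HP_rec (N:ℝ) n)
  have e2 := congrArg (eval x) (HP_rec (N:ℝ) (n + 1))
  rw [show HPm (N:ℝ) (n+1) = HP (N:ℝ) n from rfl] at e2
  simp only [eval_add, eval_sub, eval_mul, eval_pow, eval_C, eval_X] at e1 e2 ⊢
  push_cast at e1 e2 ⊢
  linear_combination dd N n * (((n:ℝ)+1) * (eval x (HP (N:ℝ) n)) * e1
    - (n:ℝ) * (eval x (HPm (N:ℝ) n)) * e2)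

/-- `D(P_n²)` where `D q = q' - aXq`. -/
lemma Dsq (a : ℝ) (n : ℕ) :
    derivative ((HP a n) ^ 2) - C a * X * (HP a n) ^ 2 =
      C ((n : ℝ) * a) * (HPm a n * HP a n) - HP a n * HP a (n + 1) := by
  rw [sq, derivative_mul, HP_deriv]
  apply Polynomial.funext; intro x
  have e1 := congrArg (eval x) (HP_rec a n)
  simp only [eval_add, eval_sub, eval_mul, eval_pow, eval_C, eval_X] at e1 ⊢
  linear_combination (- eval x (HP a n)) * e1

/-- `D(P_n P_{n+1})`. -/
lemma Dprod (a : ℝ) (n : ℕ) :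
    derivative (HP a n * HP a (n + 1)) - C a * X * (HP a n * HP a (n + 1)) =
      C (((n:ℝ) + 1) * a) * (HP a n) ^ 2 - (HP a (n + 1)) ^ 2 := by
  rw [derivative_mul, HP_deriv, HP_deriv]
  rw [show HPm a (n+1) = HP a n from rfl]
  apply Polynomial.funext; intro x
  have e1 := congrArg (eval x) (HP_rec a n)
  simp only [eval_add, eval_sub, eval_mul, eval_pow, eval_C, eval_X] at e1 ⊢
  push_cast at e1 ⊢
  linear_combination (- eval x (HP a (n+1))) * e1

/-- Telescoping: `D σ_{n+1} = -d_n P_n P_{n+1}`. -/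
lemma Dsig {N : ℕ} (hN : 0 < N) (n : ℕ) :
    derivative (sig N (n + 1)) - C (N:ℝ) * X * sig N (n + 1) =
      - (C (dd N n) * (HP (N:ℝ) n * HP (N:ℝ) (n + 1))) := by
  induction n with
  | zero =>
    rw [sig_succ]
    simp only [sig, Finset.range_zero, Finset.sum_empty, zero_add, dd_zero, map_one, one_mul]
    rw [show (HP (N:ℝ) 0) = 1 from rfl, show (HP (N:ℝ) 1) =
      C (N:ℝ) * X * HP (N:ℝ) 0 - derivative (HP (N:ℝ) 0) from rfl,
      show (HP (N:ℝ) 0) = 1 from rfl]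
    simp
  | succ n ih =>
    rw [sig_succ, derivative_add, derivative_mul, derivative_C]
    have hq := Dsq (N:ℝ) (n + 1)
    rw [show HPm (N:ℝ) (n+1) = HP (N:ℝ) n from rfl] at hq
    apply Polynomial.funext; intro x
    have i1 := congrArg (eval x) ih
    have q1 := congrArg (eval x) hq
    have hd := dd_succ hN n
    simp only [eval_add, eval_sub, eval_mul, eval_pow, eval_C, eval_X, eval_neg,
      eval_zero] at i1 q1 ⊢
    push_cast at i1 q1 ⊢
    linear_combination i1 + dd N (n+1) * q1
      - (eval x (HP (N:ℝ) n)) * (eval x (HP (N:ℝ) (n+1))) * hd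

noncomputable def DD (a : ℝ) (q : ℝ[X]) : ℝ[X] := derivative q - C a * X * q

lemma DD_neg (a : ℝ) (q : ℝ[X]) : DD a (-q) = - DD a q := by
  unfold DD; rw [derivative_neg]; ring

lemma DD_Cmul (a c : ℝ) (q : ℝ[X]) : DD a (C c * q) = C c * DD a q := by
  unfold DD; rw [derivative_mul, derivative_C]; ring

lemma DD_sub (a : ℝ) (p q : ℝ[X]) : DD a (p - q) = DD a p - DD a q := by
  unfold DD; rw [derivative_sub]; ring

lemma DD_mul (a : ℝ) (p q : ℝ[X]) :
    DD a (p * q) = derivative p * q + p * DD a q := by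
  unfold DD; rw [derivative_mul]; ring

lemma Dsq' (a : ℝ) (n : ℕ) :
    DD a ((HP a n) ^ 2) =
      C ((n : ℝ) * a) * (HPm a n * HP a n) - HP a n * HP a (n + 1) := Dsq a n

lemma Dprod' (a : ℝ) (n : ℕ) :
    DD a (HP a n * HP a (n + 1)) =
      C (((n:ℝ) + 1) * a) * (HP a n) ^ 2 - (HP a (n + 1)) ^ 2 := Dprod a n

lemma Dsig' {N : ℕ} (hN : 0 < N) (n : ℕ) :
    DD (N:ℝ) (sig N (n + 1)) =
      - (C (dd N n) * (HP (N:ℝ) n * HP (N:ℝ) (n + 1))) := Dsig hN n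

/-- The third-order ODE satisfied by the (unnormalized) GUE density, polynomial level. -/
lemma L6 {m : ℕ} :
    DD ((m+1:ℕ):ℝ) (DD ((m+1:ℕ):ℝ) (DD ((m+1:ℕ):ℝ) (sig (m+1) (m+1)))) =
      C (((m+1:ℕ):ℝ)^2) * ((X^2 - C 4) * DD ((m+1:ℕ):ℝ) (sig (m+1) (m+1)))
        - C (((m+1:ℕ):ℝ)^2) * (X * sig (m+1) (m+1)) := by
  have hN : 0 < m + 1 := Nat.succ_pos m
  rw [Dsig' hN m, DD_neg, DD_Cmul, Dprod', DD_neg, DD_Cmul, DD_sub, DD_Cmul, Dsq', Dsq']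
  rw [show HPm ((m+1:ℕ):ℝ) (m+1) = HP ((m+1:ℕ):ℝ) m from rfl]
  apply Polynomial.funext; intro x
  have e1 := congrArg (eval x) (HP_rec ((m+1:ℕ):ℝ) m)
  have e2 := congrArg (eval x) (HP_rec ((m+1:ℕ):ℝ) (m + 1))
  rw [show HPm ((m+1:ℕ):ℝ) (m+1) = HP ((m+1:ℕ):ℝ) m from rfl] at e2
  have hx := congrArg (eval x) (Xsig hN m)
  simp only [eval_add, eval_sub, eval_mul, eval_pow, eval_C, eval_X, eval_neg,
    Nat.cast_add, Nat.cast_one, Nat.cast_ofNat] at e1 e2 hx ⊢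
  linear_combination dd (m+1) m * (((m:ℝ)+1) * x * (eval x (HP ((m:ℝ)+1) (m+1))) * e1
      + ((eval x (HP ((m:ℝ)+1) (m+1))) + (m:ℝ)*((m:ℝ)+1) * (eval x (HPm ((m:ℝ)+1) m))) * e2)
    + ((m:ℝ)+1) * hx


/-! ### Integration layer -/

noncomputable def w (N : ℕ) (t : ℝ) : ℝ := Real.exp (-(↑N * t ^ 2) / 2)

lemma w_eq (N : ℕ) (t : ℝ) : w N t = Real.exp (-((N:ℝ)/2 * t ^ 2)) := by
  unfold w; congr 1; ring

noncomputable def II (N : ℕ) (q : ℝ[X]) : ℝ := ∫ t : ℝ, q.eval t * w N t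

variable {N : ℕ}

lemma integrable_II (hN : 0 < N) (q : ℝ[X]) :
    Integrable fun t => q.eval t * w N t := by
  have hNpos : (0:ℝ) < (N:ℝ)/2 := by
    have : (0:ℝ) < N := by exact_mod_cast hN
    positivity
  have h := integrable_poly_gauss hNpos q
  have hfun : (fun t : ℝ => q.eval t * w N t)
      = fun t : ℝ => q.eval t * Real.exp (-((N:ℝ)/2 * t ^ 2)) := funext fun t => by rw [w_eq]
  rw [hfun]; exact h

lemma hasDerivAt_w (t : ℝ) : HasDerivAt (w N) (-(N:ℝ) * t * w N t) t := by
  have h1 : HasDerivAt (fun t : ℝ => -(↑N * t ^ 2) / 2) (-(N:ℝ) * t) t := by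
    have := ((hasDerivAt_pow 2 t).const_mul (N:ℝ)).neg.div_const 2
    refine this.congr_deriv ?_
    norm_num; ring
  have h2 := (Real.hasDerivAt_exp (-(↑N * t ^ 2) / 2)).comp t h1
  have h3 : HasDerivAt (w N) (Real.exp (-(↑N * t ^ 2) / 2) * (-(N:ℝ) * t)) t := h2
  convert h3 using 1
  rw [w]; ring

lemma hasDerivAt_F (q : ℝ[X]) (t : ℝ) :
    HasDerivAt (fun t => q.eval t * w N t) ((DD (N:ℝ) q).eval t * w N t) t := by
  have h := (q.hasDerivAt t).mul (hasDerivAt_w (N := N) t)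
  refine h.congr_deriv ?_
  simp only [DD, eval_sub, eval_mul, eval_C, eval_X]
  ring

lemma II_DD_zero (hN : 0 < N) (q : ℝ[X]) : II N (DD (N:ℝ) q) = 0 := by
  have hNpos : (0:ℝ) < (N:ℝ)/2 := by
    have : (0:ℝ) < N := by exact_mod_cast hN
    positivity
  have hb : (0:ℝ) < (N:ℝ)/2/2 := by positivity
  have htop : Tendsto (fun t => q.eval t * w N t) atTop (nhds 0) := by
    have := tendsto_poly_gauss hNpos q atTop (tendsto_sq_param_atTop hb)
    refine this.congr (fun t => by rw [w_eq])
  have hbot : Tendsto (fun t => q.eval t * w N t) atBot (nhds 0) := by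
    have := tendsto_poly_gauss hNpos q atBot (tendsto_sq_param_atBot hb)
    refine this.congr (fun t => by rw [w_eq])
  exact integral_deriv_zero _ _ (hasDerivAt_F q) (integrable_II hN _) htop hbot

lemma II_add (hN : 0 < N) (p q : ℝ[X]) : II N (p + q) = II N p + II N q := by
  unfold II
  rw [← MeasureTheory.integral_add (integrable_II hN p) (integrable_II hN q)]
  congr 1; funext t; simp only [eval_add]; ring

lemma II_Cmul (c : ℝ) (p : ℝ[X]) : II N (C c * p) = c * II N p := by
  unfold II
  rw [← MeasureTheory.integral_const_mul]
  congr 1; funext t; simp only [eval_mul, eval_C]; ring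

lemma II_neg (p : ℝ[X]) : II N (-p) = - II N p := by
  unfold II
  rw [← MeasureTheory.integral_neg]
  congr 1; funext t; simp only [eval_neg]; ring

lemma II_sub (hN : 0 < N) (p q : ℝ[X]) : II N (p - q) = II N p - II N q := by
  rw [sub_eq_add_neg, II_add hN, II_neg]; ring

lemma II_ibp (hN : 0 < N) (p q : ℝ[X]) :
    II N (derivative p * q) = - II N (p * DD (N:ℝ) q) := by
  have h0 := II_DD_zero hN (p * q)
  rw [DD_mul] at h0
  rw [II_add hN] at h0
  linarith

lemma II_one (hN : 0 < N) : II N 1 = Real.sqrt (2 * π / N) := by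
  have hNne : ((N:ℝ)) ≠ 0 := by positivity
  unfold II
  simp only [eval_one, one_mul]
  have h1 : ∀ t : ℝ, w N t = Real.exp (-((N:ℝ)/2) * t ^ 2) := fun t => by
    rw [w_eq]; ring_nf
  simp only [h1]
  rw [integral_gaussian]
  congr 1
  field_simp

lemma II_HP_sq (hN : 0 < N) (k : ℕ) :
    II N ((HP (N:ℝ) k) ^ 2) = (k.factorial : ℝ) * (N:ℝ) ^ k * Real.sqrt (2 * π / N) := by
  induction k with
  | zero =>
    rw [show HP (N:ℝ) 0 = 1 from rfl]
    simpa using II_one hN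
  | succ k ih =>
    have hDDHP : DD (N:ℝ) (HP (N:ℝ) k) = -(HP (N:ℝ) (k+1)) := by
      rw [show HP (N:ℝ) (k+1) = C (N:ℝ) * X * HP (N:ℝ) k - derivative (HP (N:ℝ) k) from rfl,
        DD]
      ring
    have hkey : (HP (N:ℝ) (k+1))^2 + DD (N:ℝ) (HP (N:ℝ) (k+1) * HP (N:ℝ) k)
        = C (((k:ℝ)+1) * N) * (HP (N:ℝ) k)^2 := by
      rw [DD_mul, hDDHP, HP_deriv, show HPm (N:ℝ) (k+1) = HP (N:ℝ) k from rfl]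
      apply Polynomial.funext; intro x
      simp only [eval_add, eval_sub, eval_mul, eval_pow, eval_C, eval_X, eval_neg,
        Nat.cast_add, Nat.cast_one]
      ring
    have h2 : II N ((HP (N:ℝ) (k+1))^2)
        = II N ((HP (N:ℝ) (k+1))^2 + DD (N:ℝ) (HP (N:ℝ) (k+1) * HP (N:ℝ) k)) := by
      rw [II_add hN, II_DD_zero hN, add_zero]
    rw [h2, hkey, II_Cmul, ih, Nat.factorial_succ]
    push_cast
    ring

lemma II_sig (hN : 0 < N) : II N (sig N N) = (N:ℝ) * Real.sqrt (2 * π / N) := by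
  have h1 : II N (sig N N) = ∑ k ∈ range N, II N (C (dd N k) * (HP (N:ℝ) k) ^ 2) := by
    unfold II sig
    rw [← MeasureTheory.integral_finset_sum _ (fun k _ => integrable_II hN _)]
    congr 1; funext t
    rw [eval_finset_sum, Finset.sum_mul]
  rw [h1]
  have h2 : ∀ k ∈ range N, II N (C (dd N k) * (HP (N:ℝ) k) ^ 2) = Real.sqrt (2 * π / N) := by
    intro k _
    rw [II_Cmul, II_HP_sq hN k, dd]
    have hfac : ((k.factorial : ℝ)) ≠ 0 := by positivity
    have hNne : ((N:ℝ)) ≠ 0 := by positivity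
    field_simp
  rw [Finset.sum_congr rfl h2, Finset.sum_const, Finset.card_range, nsmul_eq_mul]




lemma iteratedDeriv_gauss (N k : ℕ) :
    ∀ x : ℝ, iteratedDeriv k (fun y : ℝ => Real.exp (-(↑N * y ^ 2) / 2)) x
      = (-1)^k * (HP (N:ℝ) k).eval x * w N x := by
  induction k with
  | zero =>
    intro x
    simp [HP, w]
  | succ k ih =>
    intro x
    rw [iteratedDeriv_succ]
    have hfun : iteratedDeriv k (fun y : ℝ => Real.exp (-(↑N * y ^ 2) / 2))
        = fun x => (-1:ℝ)^k * (HP (N:ℝ) k).eval x * w N x := funext ih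
    rw [hfun]
    have hd : HasDerivAt (fun x => (-1:ℝ)^k * (HP (N:ℝ) k).eval x * w N x)
        ((-1:ℝ)^k * (derivative (HP (N:ℝ) k)).eval x * w N x
          + (-1:ℝ)^k * (HP (N:ℝ) k).eval x * (-(N:ℝ) * x * w N x)) x := by
      have := (((HP (N:ℝ) k).hasDerivAt x).const_mul ((-1:ℝ)^k)).mul
        (hasDerivAt_w (N := N) x)
      refine this.congr_deriv ?_
      try ring
    rw [hd.deriv]
    have hdef : HP (N:ℝ) (k+1) = C (N:ℝ) * X * HP (N:ℝ) k - derivative (HP (N:ℝ) k) := rfl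
    rw [hdef]
    simp only [eval_sub, eval_mul, eval_C, eval_X, pow_succ]
    ring

lemma hermN_eq (N k : ℕ) (x : ℝ) : hermN N k x = (HP (N:ℝ) k).eval x := by
  rw [hermN, iteratedDeriv_gauss]
  have hcancel : Real.exp (↑N * x ^ 2 / 2) * w N x = 1 := by
    rw [w, ← Real.exp_add, show ↑N * x ^ 2 / 2 + -(↑N * x ^ 2) / 2 = 0 by ring, Real.exp_zero]
  have hsq : ((-1:ℝ))^k * (-1:ℝ)^k = 1 := by
    rw [← mul_pow]
    norm_num
  calc (-1:ℝ) ^ k * Real.exp (↑N * x ^ 2 / 2) * ((-1)^k * (HP (N:ℝ) k).eval x * w N x)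
      = ((-1:ℝ)^k * (-1:ℝ)^k) * (Real.exp (↑N * x ^ 2 / 2) * w N x) * (HP (N:ℝ) k).eval x := by
        ring
    _ = (HP (N:ℝ) k).eval x := by rw [hcancel, hsq]; ring




lemma sqrt_pos' {N : ℕ} (hN : 0 < N) : (0:ℝ) < Real.sqrt (2 * π / N) := by
  apply Real.sqrt_pos.mpr
  have h1 : (0:ℝ) < N := by exact_mod_cast hN
  have := Real.pi_pos
  positivity

lemma htilde_sq {N : ℕ} (hN : 0 < N) (k : ℕ) (t : ℝ) :
    (htilde N k t)^2 = dd N k * ((HP (N:ℝ) k).eval t)^2 / Real.sqrt (2 * π / N) := by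
  rw [htilde, div_pow, hermN_eq]
  have hc : (0:ℝ) ≤ (k.factorial : ℝ) * (N:ℝ)^k * Real.sqrt (2 * π / N) := by positivity
  rw [Real.sq_sqrt hc, dd]
  have h1 : ((k.factorial:ℝ)) ≠ 0 := by positivity
  have h2 : ((N:ℝ)) ≠ 0 := by positivity
  have h3 : Real.sqrt (2 * π / N) ≠ 0 := (sqrt_pos' hN).ne'
  field_simp

lemma gue_eq {N : ℕ} (hN : 0 < N) (t : ℝ) :
    gueDensity N t = (1 / ((N:ℝ) * Real.sqrt (2 * π / N))) * ((sig N N).eval t * w N t) := by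
  rw [gueDensity]
  have hs := sqrt_pos' hN
  have h2 : ((N:ℝ)) ≠ 0 := by positivity
  have hsum : ∑ k ∈ Finset.range N, (htilde N k t)^2
      = (sig N N).eval t / Real.sqrt (2 * π / N) := by
    rw [sig, eval_finset_sum, Finset.sum_div]
    apply Finset.sum_congr rfl
    intro k _
    rw [htilde_sq hN k t, eval_mul, eval_C, eval_pow]
  rw [hsum, show Real.exp (-(↑N * t ^ 2) / 2) = w N t from rfl]
  field_simp

/-- The Schwinger–Dyson / loop equation for the GUE density. -/
lemma SD {N : ℕ} (hN : 0 < N) (f : ℝ[X]) :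
    II N (((X^2 - C 4) * derivative f + C 3 * (X * f)) * sig N N)
      = ((N:ℝ)^2)⁻¹ * II N (derivative (derivative (derivative f)) * sig N N) := by
  obtain ⟨m, rfl⟩ : ∃ m, N = m + 1 := ⟨N - 1, by omega⟩
  have hN1 : 0 < m + 1 := Nat.succ_pos m
  have hane : ((m+1:ℕ):ℝ) ≠ 0 := by positivity
  set u : ℝ := II (m+1) ((derivative f * (X^2 - C 4)) * sig (m+1) (m+1)) with hu
  set v : ℝ := II (m+1) ((X * f) * sig (m+1) (m+1)) with hv
  have E1 : II (m+1) (derivative (derivative (derivative f)) * sig (m+1) (m+1))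
      = - II (m+1) (f * DD ((m+1:ℕ):ℝ) (DD ((m+1:ℕ):ℝ) (DD ((m+1:ℕ):ℝ) (sig (m+1) (m+1))))) := by
    rw [II_ibp hN1 (derivative (derivative f)) (sig (m+1) (m+1)),
        II_ibp hN1 (derivative f) (DD ((m+1:ℕ):ℝ) (sig (m+1) (m+1))),
        II_ibp hN1 f (DD ((m+1:ℕ):ℝ) (DD ((m+1:ℕ):ℝ) (sig (m+1) (m+1))))]
    ring
  have hder : derivative (f * (X^2 - C 4))
      = derivative f * (X^2 - C 4) + C 2 * (X * f) := by
    have h4 : derivative ((X:ℝ[X])^2 - C 4) = C 2 * X := by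
      rw [derivative_sub, derivative_C, derivative_X_pow]
      norm_num
    rw [derivative_mul, h4]
    ring
  have E5 : II (m+1) (f * ((X^2 - C 4) * DD ((m+1:ℕ):ℝ) (sig (m+1) (m+1))))
      = -(u + 2 * v) := by
    have h0 := II_ibp hN1 (f * (X^2 - C 4)) (sig (m+1) (m+1))
    rw [hder] at h0
    have hs2 : (derivative f * (X^2 - C 4) + C 2 * (X * f)) * sig (m+1) (m+1)
        = (derivative f * (X^2 - C 4)) * sig (m+1) (m+1) + C 2 * ((X * f) * sig (m+1) (m+1)) := by
      ring
    rw [hs2, II_add hN1, II_Cmul] at h0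
    have hs3 : (f * (X^2 - C 4)) * DD ((m+1:ℕ):ℝ) (sig (m+1) (m+1))
        = f * ((X^2 - C 4) * DD ((m+1:ℕ):ℝ) (sig (m+1) (m+1))) := by ring
    rw [hs3] at h0
    rw [← hu, ← hv] at h0
    linarith
  have E2 := L6 (m := m)
  have E3 : f * (C (((m+1:ℕ):ℝ)^2) * ((X^2 - C 4) * DD ((m+1:ℕ):ℝ) (sig (m+1) (m+1)))
        - C (((m+1:ℕ):ℝ)^2) * (X * sig (m+1) (m+1)))
      = C (((m+1:ℕ):ℝ)^2) * (f * ((X^2 - C 4) * DD ((m+1:ℕ):ℝ) (sig (m+1) (m+1))))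
        - C (((m+1:ℕ):ℝ)^2) * (f * (X * sig (m+1) (m+1))) := by ring
  have E6 : f * (X * sig (m+1) (m+1)) = (X * f) * sig (m+1) (m+1) := by ring
  have E7 : II (m+1) (f * DD ((m+1:ℕ):ℝ) (DD ((m+1:ℕ):ℝ) (DD ((m+1:ℕ):ℝ) (sig (m+1) (m+1)))))
      = ((m+1:ℕ):ℝ)^2 * (-(u + 2*v)) - ((m+1:ℕ):ℝ)^2 * v := by
    rw [E2, E3, II_sub hN1, II_Cmul, II_Cmul, E5, E6, ← hv]
  have E8 : ((X^2 - C 4) * derivative f + C 3 * (X * f)) * sig (m+1) (m+1)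
      = (derivative f * (X^2 - C 4)) * sig (m+1) (m+1) + C 3 * ((X * f) * sig (m+1) (m+1)) := by
    ring
  rw [E8, II_add hN1, II_Cmul, ← hu, ← hv, E1, E7]
  have hc2 : (((m+1:ℕ):ℝ)^2) ≠ 0 := by positivity
  field_simp
  ring


end GueAux

theorem one_step_expansion (N : ℕ) (hN : 1 ≤ N) (g f : Polynomial ℝ)
    (hfg : ∀ t : ℝ,
      g.eval t - (1 / (2 * Real.pi)) * ∫ s in (-2 : ℝ)..2, g.eval s * Real.sqrt (4 - s ^ 2) =
        (t ^ 2 - 4) * (Polynomial.derivative f).eval t + 3 * t * f.eval t) :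
    (∫ t : ℝ, g.eval t * gueDensity N t) =
      (1 / (2 * Real.pi)) * (∫ s in (-2 : ℝ)..2, g.eval s * Real.sqrt (4 - s ^ 2)) +
        (1 / (N : ℝ) ^ 2) *
          ∫ t : ℝ, ((Polynomial.derivative^[3] f).eval t) * gueDensity N t := by
  open GueAux in
  have hN0 : 0 < N := hN
  set cc : ℝ := (1 / (2 * Real.pi)) * ∫ s in (-2 : ℝ)..2, g.eval s * Real.sqrt (4 - s ^ 2)
    with hcc
  have hg : g = C cc + ((X^2 - C 4) * derivative f + C 3 * (X * f)) := by
    apply Polynomial.funext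
    intro t
    have h := hfg t
    simp only [eval_add, eval_mul, eval_sub, eval_pow, eval_C, eval_X]
    linear_combination h
  have hs := sqrt_pos' hN0
  have hNne : ((N:ℝ)) ≠ 0 := by positivity
  have hρ : ∀ q : Polynomial ℝ, (∫ t : ℝ, q.eval t * gueDensity N t)
      = (1 / ((N:ℝ) * Real.sqrt (2 * π / N))) * II N (q * sig N N) := by
    intro q
    have h1 : ∀ t : ℝ, q.eval t * gueDensity N t
        = (1 / ((N:ℝ) * Real.sqrt (2 * π / N))) * ((q * sig N N).eval t * w N t) := fun t => by
      rw [gue_eq hN0 t, eval_mul]; ring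
    simp only [h1]
    rw [MeasureTheory.integral_const_mul]
    rfl
  have hiter : (Polynomial.derivative^[3] f) = derivative (derivative (derivative f)) := by
    simp [Function.iterate_succ_apply']
  rw [hiter, hρ g, hρ (derivative (derivative (derivative f)))]
  rw [hg, show (C cc + ((X^2 - C 4) * derivative f + C 3 * (X * f))) * sig N N
      = C cc * sig N N + ((X^2 - C 4) * derivative f + C 3 * (X * f)) * sig N N from by ring,
    II_add hN0, II_Cmul, II_sig hN0, SD hN0 f]
  have h9 : Real.sqrt (2 * π / N) ≠ 0 := hs.ne'
  field_simp
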